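/- For the single-qubit selfcomplementary channel with Kraus operators K₁ = diag(sinθ, 1/√2), K₂ = [[0,1/√2],[cosθ,0]], the image of the maximally mixed state is Φ(1/2) = diag((1/2)sin²θ + 1/4, (1/2)cos²θ + 1/4), whose von Neumann entropy achieves its minimum over θ ∈ [0,π] at θ ∈ {0, π/2, π}, where Φ(1/2) = diag(1/4, 3/4) or diag(3/4, 1/4), with entropy S = −(1/4)log(1/4) − (3/4)log(3/4) ≈ 0.56233 (in bits, with log base 2); in particular S(Φ(1/2)) > (1/2)log 2 for all θ, so the lower bound (1/2)log N on the map entropy is not saturated for this family. -/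
import Mathlib


open Matrix

noncomputable section

/-- Kraus operator `K₁ = diag(sin θ, 1/√2)` (φ = 0). -/
def K1 (θ : ℝ) : Matrix (Fin 2) (Fin 2) ℂ :=
  !![(Real.sin θ : ℂ), 0; 0, ((Real.sqrt 2)⁻¹ : ℝ)]

/-- Kraus operator `K₂ = [[0, 1/√2],[cos θ, 0]]` (φ = 0). -/
def K2 (θ : ℝ) : Matrix (Fin 2) (Fin 2) ℂ :=
  !![0, ((Real.sqrt 2)⁻¹ : ℝ); (Real.cos θ : ℂ), 0]

/-- The eigenvalue `(1/2)sin²θ + 1/4` of the image of the maximally mixed state. -/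
def q (θ : ℝ) : ℝ := (Real.sin θ) ^ 2 / 2 + 1 / 4

/-- Binary (Shannon) entropy in bits. -/
def H2 (x : ℝ) : ℝ := -x * Real.logb 2 x - (1 - x) * Real.logb 2 (1 - x)

lemma H2_eq (x : ℝ) : H2 x = Real.binEntropy x / Real.log 2 := by
  simp [H2, Real.binEntropy, Real.logb, Real.log_inv]; ring

lemma H2_symm (x : ℝ) : H2 (1 - x) = H2 x := by
  rw [H2_eq, H2_eq, Real.binEntropy_one_sub]

lemma H2_le (x : ℝ) (hx : x ∈ Set.Icc (1/4 : ℝ) (3/4 : ℝ)) : H2 (1/4) ≤ H2 x := by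
  have key : ∀ y : ℝ, y ∈ Set.Icc (1/4 : ℝ) (1/2 : ℝ) → H2 (1/4) ≤ H2 y := by
    intro y hy
    rw [H2_eq, H2_eq]
    have hlog : (0:ℝ) < Real.log 2 := Real.log_pos (by norm_num)
    rw [div_le_div_iff_of_pos_right hlog]
    rcases eq_or_lt_of_le hy.1 with h | h
    · rw [h]
    · exact (Real.binEntropy_strictMonoOn (by norm_num)
        ⟨by linarith [hy.1], by norm_num [hy.2]⟩ h).le
  rcases le_total x (1/2 : ℝ) with h | h
  · exact key x ⟨hx.1, h⟩
  · calc H2 (1/4) ≤ H2 (1 - x) := key _ ⟨by linarith [hx.2], by linarith⟩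
      _ = H2 x := H2_symm x

lemma logb4 : Real.logb 2 (4:ℝ) = 2 := by
  rw [show (4:ℝ) = 2^(2:ℕ) by norm_num, Real.logb_pow]; simp

lemma H2_quarter_gt : (1/2 : ℝ) * Real.logb 2 2 < H2 (1/4) := by
  have h3 : Real.logb 2 3 < 2 := by
    have : Real.logb 2 3 < Real.logb 2 4 :=
      Real.logb_lt_logb (by norm_num) (by norm_num) (by norm_num)
    linarith [logb4]
  have e1 : Real.logb 2 (1/4 : ℝ) = -2 := by
    rw [one_div, Real.logb_inv, logb4]
  have e2 : Real.logb 2 (3/4 : ℝ) = Real.logb 2 3 - 2 := by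
    rw [Real.logb_div (by norm_num) (by norm_num), logb4]
  have e0 : Real.logb 2 (2:ℝ) = 1 := by simp
  rw [H2]
  norm_num [e1, e2, e0]
  linarith

/-- For the single-qubit selfcomplementary channel, the image of the
maximally mixed state is `Φ(1/2) = diag((1/2)sin²θ + 1/4, (1/2)cos²θ + 1/4)`; its
entropy (in bits) attains its minimum `H(1/4) = −(1/4)log(1/4) − (3/4)log(3/4)` over
`θ ∈ [0,π]` at `θ ∈ {0, π/2, π}` (where `Φ(1/2) = diag(1/4,3/4)` or `diag(3/4,1/4)`),
and it always exceeds `(1/2) log 2`, so the lower bound `(1/2) log N` on the map entropy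
is not saturated for this family. -/
theorem entropy_of_image_of_maximally_mixed (θ : ℝ) (hθ : θ ∈ Set.Icc 0 Real.pi) :
    K1 θ * ((1 / 2 : ℂ) • (1 : Matrix (Fin 2) (Fin 2) ℂ)) * (K1 θ)ᴴ
        + K2 θ * ((1 / 2 : ℂ) • (1 : Matrix (Fin 2) (Fin 2) ℂ)) * (K2 θ)ᴴ
      = !![((q θ : ℝ) : ℂ), 0; 0, (((Real.cos θ) ^ 2 / 2 + 1 / 4 : ℝ) : ℂ)] ∧
    H2 (1 / 4) ≤ H2 (q θ) ∧
    ((θ = 0 ∨ θ = Real.pi / 2 ∨ θ = Real.pi) → H2 (q θ) = H2 (1 / 4)) ∧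
    ((θ = 0 ∨ θ = Real.pi) → q θ = 1 / 4) ∧
    (θ = Real.pi / 2 → q θ = 3 / 4) ∧
    (1 / 2 : ℝ) * Real.logb 2 2 < H2 (q θ) := by
  have hqmem : q θ ∈ Set.Icc (1/4 : ℝ) (3/4 : ℝ) := by
    constructor
    · have := sq_nonneg (Real.sin θ); simp only [q]; linarith
    · have := Real.sin_sq_le_one θ; simp only [q]; linarith
  refine ⟨?_, H2_le _ hqmem, ?_, ?_, ?_, lt_of_lt_of_le H2_quarter_gt (H2_le _ hqmem)⟩
  · have h2 : Real.sqrt 2 * Real.sqrt 2 = 2 := Real.mul_self_sqrt (by norm_num)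
    ext i j
    fin_cases i <;> fin_cases j <;>
      simp [K1, K2, q, Matrix.mul_apply, Fin.sum_univ_two, Matrix.one_apply,
        Matrix.conjTranspose_apply, Matrix.vecMul, dotProduct,
        Complex.ext_iff, Complex.sin_ofReal_re, Complex.sin_ofReal_im,
        Complex.cos_ofReal_re, Complex.cos_ofReal_im, pow_two] <;>
      nlinarith [h2]
  · rintro (rfl | rfl | rfl)
    · norm_num [q]
    · have : q (Real.pi / 2) = 3/4 := by norm_num [q]
      rw [this, show (3/4 : ℝ) = 1 - 1/4 by norm_num, H2_symm]
    · norm_num [q]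
  · rintro (rfl | rfl) <;> norm_num [q]
  · rintro rfl; norm_num [q]

end
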